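/- Let G = ⊕_ω Z/2Z with the topology inherited from the product topology, and let f : ω → ω. Then the set C_f = {x ∈ G \ {0} : max supp(x) ≤ f(min supp(x))} is discrete in the subspace topology, and C_f ∪ {0} is closed in G. -/

import Mathlib

noncomputable def mins (x : ℕ →₀ ZMod 2) : ℕ := sInf {n | x n ≠ 0}
noncomputable def maxs (x : ℕ →₀ ZMod 2) : ℕ := sSup {n | x n ≠ 0}

def prodTop : TopologicalSpace (ℕ →₀ ZMod 2) :=
  TopologicalSpace.induced (fun x => (x : ℕ → ZMod 2))
    (@Pi.topologicalSpace ℕ (fun _ => ZMod 2) (fun _ => ⊥))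

def Cf (f : ℕ → ℕ) : Set (ℕ →₀ ZMod 2) := {x | x ≠ 0 ∧ maxs x ≤ f (mins x)}

lemma supp_set_eq (x : ℕ →₀ ZMod 2) : {n | x n ≠ 0} = ↑x.support := by
  ext n; simp [Finsupp.mem_support_iff]

lemma supp_bdd (x : ℕ →₀ ZMod 2) : BddAbove {n | x n ≠ 0} := by
  rw [supp_set_eq]; exact x.support.finite_toSet.bddAbove

lemma supp_ne (x : ℕ →₀ ZMod 2) (hx : x ≠ 0) : {n | x n ≠ 0}.Nonempty := by
  rcases Finsupp.ne_iff.mp hx with ⟨n, hn⟩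
  exact ⟨n, by simpa using hn⟩

lemma mins_mem (x : ℕ →₀ ZMod 2) (hx : x ≠ 0) : x (mins x) ≠ 0 :=
  Nat.sInf_mem (supp_ne x hx)

lemma maxs_mem (x : ℕ →₀ ZMod 2) (hx : x ≠ 0) : x (maxs x) ≠ 0 :=
  Nat.sSup_mem (supp_ne x hx) (supp_bdd x)

lemma mins_le (x : ℕ →₀ ZMod 2) (n : ℕ) (h : x n ≠ 0) : mins x ≤ n := Nat.sInf_le h

lemma le_maxs (x : ℕ →₀ ZMod 2) (n : ℕ) (h : x n ≠ 0) : n ≤ maxs x :=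
  le_csSup (supp_bdd x) h

lemma mins_le_maxs (x : ℕ →₀ ZMod 2) (hx : x ≠ 0) : mins x ≤ maxs x :=
  le_maxs x _ (mins_mem x hx)

/-- The basic open set of points agreeing with `x` on coordinates `≤ N`. -/
def agreeSet (N : ℕ) (x : ℕ →₀ ZMod 2) : Set (ℕ →₀ ZMod 2) :=
  {y | ∀ i ≤ N, y i = x i}

lemma isOpen_agree (N : ℕ) (x : ℕ →₀ ZMod 2) :
    @IsOpen _ prodTop (agreeSet N x) := by
  letI : TopologicalSpace (ℕ →₀ ZMod 2) := prodTop
  letI Tpi : TopologicalSpace (ℕ → ZMod 2) :=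
    @Pi.topologicalSpace ℕ (fun _ => ZMod 2) (fun _ => ⊥)
  have hset : agreeSet N x
      = (fun y : ℕ →₀ ZMod 2 => (y : ℕ → ZMod 2)) ⁻¹'
        (⋂ i ∈ Finset.range (N+1), (fun g : ℕ → ZMod 2 => g i) ⁻¹' {x i}) := by
    ext y
    simp [agreeSet, Nat.lt_succ_iff]
  rw [hset]
  have hopen : @IsOpen _ Tpi
      (⋂ i ∈ Finset.range (N+1), (fun g : ℕ → ZMod 2 => g i) ⁻¹' {x i}) := by
    apply isOpen_biInter_finset
    intro i _
    have hc : @Continuous _ _ Tpi ⊥ (fun g : ℕ → ZMod 2 => g i) := @continuous_apply _ _ (fun _ => ⊥) i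
    exact hc.isOpen_preimage _ (@isOpen_discrete _ ⊥ ⟨rfl⟩ _)
  show @IsOpen _ (TopologicalSpace.induced (fun y : ℕ →₀ ZMod 2 => (y : ℕ → ZMod 2)) Tpi) _
  exact isOpen_induced hopen

lemma mem_agree_self (N : ℕ) (x : ℕ →₀ ZMod 2) : x ∈ agreeSet N x := fun _ _ => rfl

lemma agree_mins {x y : ℕ →₀ ZMod 2} {N : ℕ} (hx : x ≠ 0) (hM : maxs x ≤ N)
    (h : y ∈ agreeSet N x) : y ≠ 0 ∧ mins y = mins x := by
  have hm : mins x ≤ N := le_trans (mins_le_maxs x hx) hM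
  have hym : y (mins x) ≠ 0 := by rw [h _ hm]; exact mins_mem x hx
  have hy0 : y ≠ 0 := fun h0 => hym (by simp [h0])
  refine ⟨hy0, le_antisymm (mins_le y _ hym) ?_⟩
  by_contra hlt
  push_neg at hlt
  have h1 : y (mins y) ≠ 0 := mins_mem y hy0
  have h2 : y (mins y) = x (mins y) := h _ (le_trans (le_of_lt hlt) hm)
  have h3 : x (mins y) = 0 := by
    by_contra h4
    exact absurd (mins_le x _ h4) (not_le.mpr hlt)
  exact h1 (h2.trans h3)

/-- C_f is discrete in the product topology and C_f ∪ {0} is closed. -/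
theorem stmt4 (f : ℕ → ℕ) :
    letI : TopologicalSpace (ℕ →₀ ZMod 2) := prodTop
    DiscreteTopology ↥(Cf f) ∧ IsClosed (Cf f ∪ {0}) := by
  letI : TopologicalSpace (ℕ →₀ ZMod 2) := prodTop
  constructor
  · -- discreteness
    rw [discreteTopology_iff_isOpen_singleton]
    rintro ⟨x, hx0, hxf⟩
    have hU : IsOpen (agreeSet (f (mins x)) x) := isOpen_agree _ x
    have key : (Subtype.val : ↥(Cf f) → _) ⁻¹' (agreeSet (f (mins x)) x)
        = {(⟨x, hx0, hxf⟩ : ↥(Cf f))} := by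
      ext ⟨y, hy0, hyf⟩
      simp only [Set.mem_preimage, Set.mem_singleton_iff, Subtype.mk.injEq]
      constructor
      · intro hy
        obtain ⟨-, hmins⟩ := agree_mins hx0 hxf hy
        have hymax : maxs y ≤ f (mins x) := by rw [← hmins]; exact hyf
        ext i
        by_cases hi : i ≤ f (mins x)
        · exact hy i hi
        · push_neg at hi
          have hyi : y i = 0 := by
            by_contra h
            exact absurd (le_trans (le_maxs y i h) hymax) (not_le.mpr hi)
          have hxi : x i = 0 := by
            by_contra h
            exact absurd (le_trans (le_trans (le_maxs x i h) hxf) (le_refl _))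
              (not_le.mpr hi)
          rw [hyi, hxi]
      · intro h
        rw [show y = x from congrArg Subtype.val h]
        exact mem_agree_self _ _
    rw [← key]
    exact hU.preimage continuous_subtype_val
  · -- closedness
    rw [← isOpen_compl_iff]
    rw [isOpen_iff_forall_mem_open]
    intro z hz
    simp only [Set.mem_compl_iff, Set.mem_union, Set.mem_singleton_iff, not_or] at hz
    obtain ⟨hzC, hz0⟩ := hz
    simp only [Cf, Set.mem_setOf_eq, not_and, not_le] at hzC
    have hzf : f (mins z) < maxs z := hzC hz0
    refine ⟨agreeSet (maxs z) z, ?_, isOpen_agree _ z, mem_agree_self _ z⟩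
    intro y hy
    simp only [Set.mem_compl_iff, Set.mem_union, Set.mem_singleton_iff, not_or]
    obtain ⟨hy0, hmins⟩ := agree_mins hz0 le_rfl hy
    have hyM : y (maxs z) ≠ 0 := by rw [hy _ le_rfl]; exact maxs_mem z hz0
    have hymax : maxs z ≤ maxs y := le_maxs y _ hyM
    refine ⟨?_, hy0⟩
    rintro ⟨-, hyf⟩
    rw [hmins] at hyf
    exact absurd (le_trans hymax hyf) (not_le.mpr hzf)
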